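/- Roos bound with consecutive N: Let N and M be nonempty subsets of Ω with N consecutive, and define MN = { εη/α : ε ∈ M, η ∈ N } ⊆ Ω. If there exists a consecutive subset M′ of Ω with M ⊆ M′ and |M′| < |M| + |N|, then every nonzero codeword of D_{MN} has Hamming weight at least |M| + |N|. -/

import Mathlib

open Polynomial

open scoped Classical in
/-- Hamming weight: the number of nonzero coordinates. -/
noncomputable def wt {ι K : Type*} [Fintype ι] [Zero K] (c : ι → K) : ℕ :=
  (Finset.univ.filter fun i => c i ≠ 0).card

/-- The λ-constacyclic code of length `m` over `F` with zero set `P`. -/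
def Dcode {F : Type*} [Field F] (m : ℕ) (P : Set F) : Set (Fin m → F) :=
  {c | ∀ β ∈ P, ∑ k : Fin m, c k * β ^ (k : ℕ) = 0}

/-- A consecutive subset of Ω: `{αξ^(e+zn) : 0 ≤ z ≤ δ-2}` with `gcd(m,n) = 1`. -/
def IsConsecutive {F : Type*} [Field F] (m : ℕ) (α ξ : F) (E : Set F) : Prop :=
  ∃ e δ n : ℕ, 2 ≤ δ ∧ 0 < n ∧ Nat.Coprime m n ∧
    E = {x | ∃ z < δ - 1, x = α * ξ ^ (e + z * n)}

section Helpers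

open Matrix Module Submodule

lemma vand_indep {F ι : Type*} [Field F] [Fintype ι] [DecidableEq ι]
    (x d : ι → F) (hx : Function.Injective x) (hd : ∀ i, d i ≠ 0)
    {t : ℕ} (ht : t ≤ Fintype.card ι) :
    LinearIndependent F (fun z : Fin t => fun i : ι => d i * x i ^ (z : ℕ)) := by
  rw [Fintype.linearIndependent_iff]
  intro a ha
  obtain ⟨T, -, hT⟩ := Finset.exists_subset_card_eq (s := (Finset.univ : Finset ι))
    (by simpa using ht)
  let e : Fin t ≃ {i // i ∈ T} := (T.equivFin.trans (finCongr hT)).symm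
  set Q : Matrix (Fin t) (Fin t) F :=
    Matrix.of fun j z : Fin t => d (e j) * (x (e j)) ^ (z : ℕ) with hQdef
  have hdet : Q.det ≠ 0 := by
    have h1 : Q = Matrix.of fun j z => d (e j) *
        (Matrix.vandermonde fun j : Fin t => x (e j)) j z := rfl
    rw [h1, Matrix.det_mul_column, Matrix.det_vandermonde]
    refine mul_ne_zero (Finset.prod_ne_zero_iff.2 fun j _ => hd _) ?_
    refine Finset.prod_ne_zero_iff.2 fun i _ => Finset.prod_ne_zero_iff.2 fun j hj => ?_
    rw [Finset.mem_Ioi] at hj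
    refine sub_ne_zero_of_ne fun hxy => hj.ne ?_
    exact (e.injective (Subtype.ext (hx hxy))).symm
  have hQa : Q.mulVec a = 0 := by
    funext j
    have h2 := congrFun ha ((e j : {i // i ∈ T}) : ι)
    simpa [hQdef, Matrix.mulVec, dotProduct, mul_comm, mul_left_comm, mul_assoc] using h2
  have hinj : Function.Injective Q.mulVec :=
    Matrix.mulVec_injective_iff_isUnit.2 ((Matrix.isUnit_iff_isUnit_det Q).2
      (isUnit_iff_ne_zero.2 hdet))
  intro z
  have h0 : Q.mulVec a = Q.mulVec 0 := by rw [hQa, Matrix.mulVec_zero]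
  exact congrFun (hinj h0) z

lemma indep_le_finrank {F V : Type*} [Field F] [AddCommGroup V] [Module F V]
    [FiniteDimensional F V] {t : ℕ} {v : Fin t → V} (hv : LinearIndependent F v)
    {P : Submodule F V} (hP : ∀ z, v z ∈ P) : t ≤ finrank F P := by
  have h1 : span F (Set.range v) ≤ P := span_le.2 (Set.range_subset_iff.2 hP)
  have h2 := finrank_span_eq_card hv
  have h3 := Submodule.finrank_mono h1
  rw [h2, Fintype.card_fin] at h3
  exact h3

lemma my_finrank_sup_le {F V : Type*} [Field F] [AddCommGroup V] [Module F V]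
    [FiniteDimensional F V] (p q : Submodule F V) :
    finrank F ↥(p ⊔ q) ≤ finrank F p + finrank F q := by
  have := Submodule.finrank_sup_add_finrank_inf_eq p q
  omega

end Helpers

open Matrix Module Submodule in
theorem roos_bound_consecutive
    {Fq F : Type*} [Field Fq] [Fintype Fq] [Field F] [Algebra Fq F]
    (m : ℕ) (hm : 0 < m) (hcop : Nat.Coprime m (Fintype.card Fq))
    (lam : Fq) (hlam : lam ≠ 0)
    (r : ℕ) (hr : orderOf lam = r)
    (hsplit : IsSplittingField Fq F (X ^ m - C lam))
    (α : F) (hα : IsPrimitiveRoot α (r * m))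
    (hαm : α ^ m = algebraMap Fq F lam)
    (Ω : Set F) (hΩ : Ω = {x : F | ∃ k < m, x = α * (α ^ r) ^ k})
    (M N : Set F) (hM : M.Nonempty) (hN : N.Nonempty)
    (hMΩ : M ⊆ Ω) (hNΩ : N ⊆ Ω)
    (hNcons : IsConsecutive m α (α ^ r) N)
    (MN : Set F) (hMN : MN = {x : F | ∃ ε ∈ M, ∃ η ∈ N, x = ε * η / α})
    (M' : Set F) (hM'cons : IsConsecutive m α (α ^ r) M')
    (hMM' : M ⊆ M') (hcard : M'.ncard < M.ncard + N.ncard) :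
    ∀ c ∈ Dcode m MN, c ≠ 0 → M.ncard + N.ncard ≤ wt c := by
  classical
  intro c hc hc0
  -- basic positivity facts
  have hq2 : 1 < Fintype.card Fq := Fintype.one_lt_card
  have hlfin : IsOfFinOrder lam := isOfFinOrder_iff_pow_eq_one.2
    ⟨Fintype.card Fq - 1, by omega, FiniteField.pow_card_sub_one_eq_one lam hlam⟩
  have hr0 : 0 < r := hr ▸ orderOf_pos_iff.2 hlfin
  have hrm : 0 < r * m := Nat.mul_pos hr0 hm
  have hα0 : α ≠ 0 := hα.ne_zero hrm.ne'
  have hξ : IsPrimitiveRoot (α ^ r) m := IsPrimitiveRoot.pow hrm hα rfl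
  have hξ0 : (α : F) ^ r ≠ 0 := pow_ne_zero _ hα0
  -- the support of c
  set S : Finset (Fin m) := Finset.univ.filter (fun i => c i ≠ 0) with hS
  have hwt : wt c = S.card := rfl
  have hSne : S.Nonempty := by
    obtain ⟨i, hi⟩ : ∃ i, c i ≠ 0 := by
      by_contra h; push_neg at h; exact hc0 (funext h)
    exact ⟨i, by simp [hS, hi]⟩
  have hcardS : Fintype.card ↥S = S.card := Fintype.card_coe S
  -- Ω facts
  have hΩ0 : ∀ x ∈ Ω, x ≠ 0 := by
    rw [hΩ]; rintro x ⟨k, -, rfl⟩; exact mul_ne_zero hα0 (pow_ne_zero _ hξ0)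
  have himg : ∀ a k n : ℕ, ({x : F | ∃ z < k, x = α * (α ^ r) ^ (a + z * n)} : Set F) =
      (fun z : ℕ => α * (α ^ r) ^ (a + z * n)) '' Set.Iio k := by
    intro a k n; ext x
    constructor
    · rintro ⟨z, hz, rfl⟩; exact ⟨z, hz, rfl⟩
    · rintro ⟨z, hz, rfl⟩; exact ⟨z, hz, rfl⟩
  have hIio : ∀ k : ℕ, (Set.Iio k).ncard = k := by
    intro k
    rw [show Set.Iio k = ↑(Finset.range k) by ext; simp, Set.ncard_coe_finset,
      Finset.card_range]
  have hΩfin : Ω.Finite := by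
    rw [hΩ]
    have h1 : {x : F | ∃ k < m, x = α * (α ^ r) ^ k} =
        {x : F | ∃ z < m, x = α * (α ^ r) ^ (0 + z * 1)} := by simp
    rw [h1, himg]
    exact (Set.finite_Iio m).image _
  have hMfin : M.Finite := hΩfin.subset hMΩ
  have hNfin : N.Finite := hΩfin.subset hNΩ
  -- consecutive data
  obtain ⟨f, δN, nN, hδN, hnN, hcopN, hNeq⟩ := hNcons
  obtain ⟨e, δ', n', hδ', hn', hcop', hM'eq⟩ := hM'cons
  have hM'fin : M'.Finite := by
    rw [hM'eq, himg]; exact (Set.finite_Iio _).image _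
  have hM'card : M'.ncard ≤ δ' - 1 := by
    rw [hM'eq, himg]
    exact le_trans (Set.ncard_image_le (Set.finite_Iio _)) (hIio _).le
  have hNcard : N.ncard ≤ δN - 1 := by
    rw [hNeq, himg]
    exact le_trans (Set.ncard_image_le (Set.finite_Iio _)) (hIio _).le
  -- the two families of vectors
  set u : F → (↥S → F) := fun β i => β ^ ((i : Fin m) : ℕ) with hu
  set bv : F → (↥S → F) := fun η i => c i * (η / α) ^ ((i : Fin m) : ℕ) with hbv
  -- orthogonality from the code
  have key : ∀ ε ∈ M, ∀ η ∈ N, ∑ i : ↥S, u ε i * bv η i = 0 := by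
    intro ε hε η hη
    have hmem : ε * η / α ∈ MN := by rw [hMN]; exact ⟨ε, hε, η, hη, rfl⟩
    have h0 := hc _ hmem
    have h1 : ∑ k ∈ S, c k * (ε * η / α) ^ (k : ℕ) = 0 := by
      rw [← h0]
      refine Finset.sum_subset (Finset.subset_univ S) ?_
      intro k _ hk
      have hck : c k = 0 := by simpa [hS] using hk
      simp [hck]
    calc ∑ i : ↥S, u ε i * bv η i
        = ∑ i : ↥S, c (i : Fin m) * (ε * η / α) ^ ((i : Fin m) : ℕ) := by
          refine Finset.sum_congr rfl fun i _ => ?_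
          simp only [hu, hbv]
          rw [mul_div_assoc, mul_pow]
          ring
      _ = ∑ k ∈ S, c k * (ε * η / α) ^ (k : ℕ) :=
          Finset.sum_coe_sort S (fun k => c k * (ε * η / α) ^ (k : ℕ))
      _ = 0 := h1
  -- subspaces
  set V := span F (u '' M) with hV
  set V' := span F (u '' M') with hV'
  set W := span F (bv '' N) with hW
  -- injectivity of power maps on the support
  have hinjpow : ∀ n : ℕ, Nat.Coprime m n →
      Function.Injective (fun i : ↥S => ((α ^ r) ^ n) ^ ((i : Fin m) : ℕ)) := by
    intro n hn
    have hp : IsPrimitiveRoot ((α ^ r) ^ n) m := hξ.pow_of_coprime n hn.symm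
    intro i j hij
    have h2 := hp.pow_inj (i : Fin m).isLt (j : Fin m).isLt hij
    exact Subtype.ext (Fin.ext h2)
  have hcne : ∀ i : ↥S, c (i : Fin m) ≠ 0 := fun i => by
    have h2 := i.2
    exact (Finset.mem_filter.1 h2).2
  -- lower bound for finrank W
  have hF2 : min N.ncard S.card ≤ finrank F W := by
    set t := min N.ncard S.card with htdef
    have htle : t ≤ Fintype.card ↥S := by rw [hcardS]; exact min_le_right _ _
    have hind := vand_indep (F := F) (ι := ↥S)
      (fun i => ((α ^ r) ^ nN) ^ ((i : Fin m) : ℕ))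
      (fun i => c (i : Fin m) * ((α ^ r) ^ f) ^ ((i : Fin m) : ℕ))
      (hinjpow nN hcopN)
      (fun i => mul_ne_zero (hcne i) (pow_ne_zero _ (pow_ne_zero _ hξ0)))
      htle
    have heq : (fun z : Fin t => fun i : ↥S =>
        (c (i : Fin m) * ((α ^ r) ^ f) ^ ((i : Fin m) : ℕ)) *
          (((α ^ r) ^ nN) ^ ((i : Fin m) : ℕ)) ^ (z : ℕ)) =
        fun z : Fin t => bv (α * (α ^ r) ^ (f + (z : ℕ) * nN)) := by
      funext z i
      simp only [hbv]
      rw [mul_div_cancel_left₀ _ hα0]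
      ring
    rw [heq] at hind
    refine indep_le_finrank hind fun z => ?_
    refine subset_span ⟨α * (α ^ r) ^ (f + (z : ℕ) * nN), ?_, rfl⟩
    rw [hNeq]
    exact ⟨(z : ℕ), lt_of_lt_of_le z.isLt (le_trans (min_le_left _ _) hNcard), rfl⟩
  -- lower bound for finrank V'
  have hF3 : min M'.ncard S.card ≤ finrank F V' := by
    set t := min M'.ncard S.card with htdef
    have htle : t ≤ Fintype.card ↥S := by rw [hcardS]; exact min_le_right _ _
    have hind := vand_indep (F := F) (ι := ↥S)
      (fun i => ((α ^ r) ^ n') ^ ((i : Fin m) : ℕ))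
      (fun i => (α * (α ^ r) ^ e) ^ ((i : Fin m) : ℕ))
      (hinjpow n' hcop')
      (fun i => pow_ne_zero _ (mul_ne_zero hα0 (pow_ne_zero _ hξ0)))
      htle
    have heq : (fun z : Fin t => fun i : ↥S =>
        ((α * (α ^ r) ^ e) ^ ((i : Fin m) : ℕ)) *
          (((α ^ r) ^ n') ^ ((i : Fin m) : ℕ)) ^ (z : ℕ)) =
        fun z : Fin t => u (α * (α ^ r) ^ (e + (z : ℕ) * n')) := by
      funext z i
      simp only [hu]
      ring
    rw [heq] at hind
    refine indep_le_finrank hind fun z => ?_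
    refine subset_span ⟨α * (α ^ r) ^ (e + (z : ℕ) * n'), ?_, rfl⟩
    rw [hM'eq]
    exact ⟨(z : ℕ), lt_of_lt_of_le z.isLt (le_trans (min_le_left _ _) hM'card), rfl⟩
  -- finrank V' vs finrank V
  have hV'le : finrank F V' ≤ finrank F V + (M'.ncard - M.ncard) := by
    have h1 : V' = V ⊔ span F (u '' (M' \ M)) := by
      rw [hV', hV, ← Submodule.span_union, ← Set.image_union, Set.union_diff_cancel hMM']
    rw [h1]
    refine le_trans (my_finrank_sup_le _ _) ?_
    have h2 : finrank F (span F (u '' (M' \ M))) ≤ (M' \ M).ncard := by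
      haveI := ((hM'fin.diff (t := M)).image u).fintype
      refine le_trans (finrank_span_le_card _) ?_
      rw [← Set.ncard_eq_toFinset_card']
      exact Set.ncard_image_le (hM'fin.diff (t := M))
    have h3 : (M' \ M).ncard = M'.ncard - M.ncard := Set.ncard_diff hMM' hMfin
    omega
  -- finrank V is positive
  have hF4 : 1 ≤ finrank F V := by
    obtain ⟨ε0, hε0⟩ := hM
    have hne : u ε0 ≠ 0 := by
      obtain ⟨i0, hi0⟩ := hSne
      intro h
      exact pow_ne_zero ((⟨i0, hi0⟩ : ↥S) : Fin m).1 (hΩ0 ε0 (hMΩ hε0))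
        (congrFun h ⟨i0, hi0⟩)
    have h1 : (F ∙ u ε0) ≤ V :=
      (Submodule.span_singleton_le_iff_mem _ _).2 (subset_span ⟨ε0, hε0, rfl⟩)
    have h2 := Submodule.finrank_mono h1
    rwa [finrank_span_singleton hne] at h2
  -- the rank-nullity bound : finrank W + finrank V ≤ S.card
  obtain ⟨B, hBsub, hBspan, hBind⟩ := exists_linearIndependent F (u '' M)
  haveI : Fintype ↥B := ((hMfin.image u).subset hBsub).fintype
  set A : Matrix ↥B ↥S F := Matrix.of fun v i => (v : ↥S → F) i with hA
  have hrangeA : Set.range A = B := by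
    ext y; constructor
    · rintro ⟨v, rfl⟩; exact v.2
    · intro hy; exact ⟨⟨y, hy⟩, rfl⟩
  have hrankA : A.rank = finrank F V := by
    rw [Matrix.rank_eq_finrank_span_row, Matrix.row_def, hrangeA, hBspan]
  set g := A.mulVecLin with hg
  have hWker : W ≤ LinearMap.ker g := by
    rw [hW, span_le]
    rintro _ ⟨η, hη, rfl⟩
    rw [SetLike.mem_coe, LinearMap.mem_ker]
    funext j
    obtain ⟨ε, hεM, hεeq⟩ := hBsub j.2
    calc g (bv η) j = ∑ i : ↥S, A j i * bv η i := by
          simp [hg, Matrix.mulVecLin_apply, Matrix.mulVec, dotProduct]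
      _ = ∑ i : ↥S, u ε i * bv η i := by
          refine Finset.sum_congr rfl fun i _ => ?_
          have : A j i = u ε i := (congrFun hεeq i).symm
          rw [this]
      _ = 0 := key ε hεM η hη
  have hnullity := LinearMap.finrank_range_add_finrank_ker g
  have hrg : finrank F (LinearMap.range g) = A.rank := rfl
  have hpi : finrank F (↥S → F) = S.card := by
    rw [Module.finrank_fintype_fun_eq_card, hcardS]
  have hWle : finrank F W ≤ finrank F (LinearMap.ker g) := Submodule.finrank_mono hWker
  have h1 : finrank F W + finrank F V ≤ S.card := by
    rw [hrg, hrankA, hpi] at hnullity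
    omega
  -- conclusion
  have h6 : M.ncard ≤ M'.ncard := Set.ncard_le_ncard hMM' hM'fin
  rw [hwt]
  omega
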